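/- Let φ⁰ and φ¹ be two deterministic policies of an MDP and let π* be the stationary policy π*(B|x) = ½(1{φ⁰(x) ∈ B} + 1{φ¹(x) ∈ B}). Then for every stationary policy γ of the MDP defined by φ⁰ and φ¹, every nonnegative measurable function f on the state space, and every t = 0,1,…, the inequality E^γ f(x_t) ≤ 2^t E^{π*} f(x_t) holds. -/

import Mathlib

open MeasureTheory ProbabilityTheory Filter Topology
open scoped ENNReal NNReal

namespace PaperMDP

variable {S A : Type*} [MeasurableSpace S] [MeasurableSpace A]

/-- Histories up to time `t`: states `x_0,…,x_t` and actions `a_0,…,a_{t-1}`. -/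
abbrev Hist (S A : Type*) (t : ℕ) : Type _ := (Fin (t + 1) → S) × (Fin t → A)

/-- A Markov decision process model: action sets `act x` with measurable graph admitting a
measurable selector, and a transition probability kernel `p`.  The initial distribution is
supplied separately. -/
structure MDP (S A : Type*) [MeasurableSpace S] [MeasurableSpace A] where
  act : S → Set A
  act_nonempty : ∀ x, (act x).Nonempty
  graph_meas : MeasurableSet {q : S × A | q.2 ∈ act q.1}
  sel0 : S → A
  sel0_meas : Measurable sel0
  sel0_mem : ∀ x, sel0 x ∈ act x
  p : Kernel (S × A) S
  p_markov : IsMarkovKernel p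

variable (M : MDP S A)

/-- A general (randomized, history-dependent) policy. -/
structure Policy where
  ker : (t : ℕ) → Kernel (Hist S A t) A
  prob : ∀ t, IsMarkovKernel (ker t)
  feasible : ∀ t (h : Hist S A t), ker t h {a | a ∈ M.act (h.1 (Fin.last t))} = 1

/-- A measurable selector, identified with a deterministic policy. -/
structure Selector where
  toFun : S → A
  meas : Measurable toFun
  mem : ∀ x, toFun x ∈ M.act x

/-- A stationary (randomized) policy. -/
structure StatPolicy where
  ker : Kernel S A
  prob : IsMarkovKernel ker
  feasible : ∀ x, ker x {a | a ∈ M.act x} = 1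

/-- A nonrandomized Markov policy: a sequence of measurable selectors. -/
structure MarkovNR where
  sel : ℕ → S → A
  meas : ∀ t, Measurable (sel t)
  mem : ∀ t x, sel t x ∈ M.act x

variable {M}

/-- The policy determined by a selector (a deterministic policy). -/
noncomputable def Selector.policy (φ : Selector M) : Policy M where
  ker t := Kernel.deterministic (fun h : Hist S A t => φ.toFun (h.1 (Fin.last t)))
    (φ.meas.comp ((measurable_pi_apply (Fin.last t)).comp measurable_fst))
  prob t := by infer_instance
  feasible t h := by
    rw [Kernel.deterministic_apply]
    exact Measure.dirac_apply_of_mem (φ.mem _)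

/-- The policy determined by a stationary policy. -/
noncomputable def StatPolicy.policy (s : StatPolicy M) : Policy M where
  ker t := s.ker.comap (fun h : Hist S A t => h.1 (Fin.last t))
    ((measurable_pi_apply (Fin.last t)).comp measurable_fst)
  prob t := by have := s.prob; infer_instance
  feasible t h := by rw [Kernel.comap_apply]; exact s.feasible _

/-- The policy determined by a nonrandomized Markov policy. -/
noncomputable def MarkovNR.policy (φ : MarkovNR M) : Policy M where
  ker t := Kernel.deterministic (fun h : Hist S A t => φ.sel t (h.1 (Fin.last t)))
    ((φ.meas t).comp ((measurable_pi_apply (Fin.last t)).comp measurable_fst))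
  prob t := by infer_instance
  feasible t h := by
    rw [Kernel.deterministic_apply]
    exact Measure.dirac_apply_of_mem (φ.mem _ _)

/-- Finite-horizon strategic (history) measures, built by the Ionescu–Tulcea recursion from the
initial distribution `μ`, the policy `π` and the transition kernel `M.p`. -/
noncomputable def histMeas (μ : Measure S) (π : Policy M) : (t : ℕ) → Measure (Hist S A t)
  | 0 => μ.map (fun x => (fun _ => x, fun i => i.elim0))
  | (t + 1) => (histMeas μ π t).bind (fun h =>
      (π.ker t h).bind (fun a =>
        (M.p (h.1 (Fin.last t), a)).map (fun y => (Fin.snoc h.1 y, Fin.snoc h.2 a))))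

/-- The joint distribution of the state-action pair `(x_t, a_t)` under policy `π`. -/
noncomputable def saMeas (μ : Measure S) (π : Policy M) (t : ℕ) : Measure (S × A) :=
  (histMeas μ π t).bind (fun h => (π.ker t h).map (fun a => (h.1 (Fin.last t), a)))

/-- The distribution of the state `x_t` under policy `π`. -/
noncomputable def stateMeas (μ : Measure S) (π : Policy M) (t : ℕ) : Measure S :=
  (histMeas μ π t).map (fun h => h.1 (Fin.last t))

/-- `survive μ π star t = P^π(T^{star} > t)`, the probability that the process has not yet
reached the absorbing state `star` by time `t`. -/
noncomputable def survive (μ : Measure S) (π : Policy M) (star : S) (t : ℕ) : ℝ≥0∞ :=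
  histMeas μ π t {h | ∀ s, h.1 s ≠ star}

/-- The expected total reward vector `v^π` (well defined whenever the series converges;
for absorbing MDPs with bounded rewards vanishing at the absorbing state this coincides with
`E^π Σ_{t<T} r(x_t,a_t)`). -/
noncomputable def perf (μ : Measure S) {N : ℕ} (r : S × A → Fin N → ℝ) (π : Policy M) :
    Fin N → ℝ :=
  fun n => ∑' t : ℕ, ∫ z, r z n ∂(saMeas μ π t)

/-- The expected total reward for a single criterion. -/
noncomputable def perfR (μ : Measure S) (r : S × A → ℝ) (π : Policy M) : ℝ :=
  ∑' t : ℕ, ∫ z, r z ∂(saMeas μ π t)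

/-- The expected total discounted reward vector `v_β^π`. -/
noncomputable def dperf (μ : Measure S) {N : ℕ} (r : S × A → Fin N → ℝ) (β : ℝ)
    (π : Policy M) : Fin N → ℝ :=
  fun n => ∑' t : ℕ, β ^ t * ∫ z, r z n ∂(saMeas μ π t)

variable (M)

/-- The set of performance vectors of all policies. -/
def perfSet (μ : Measure S) {N : ℕ} (r : S × A → Fin N → ℝ) : Set (Fin N → ℝ) :=
  {v | ∃ π : Policy M, perf μ r π = v}

/-- The set of performance vectors of deterministic policies. -/
def perfSetDet (μ : Measure S) {N : ℕ} (r : S × A → Fin N → ℝ) : Set (Fin N → ℝ) :=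
  {v | ∃ φ : Selector M, perf μ r φ.policy = v}

/-- The set of performance vectors of stationary policies. -/
def perfSetStat (μ : Measure S) {N : ℕ} (r : S × A → Fin N → ℝ) : Set (Fin N → ℝ) :=
  {v | ∃ s : StatPolicy M, perf μ r s.policy = v}

/-- The set of scalar performance values of all policies (single criterion). -/
def perfRSet (μ : Measure S) (r : S × A → ℝ) : Set ℝ :=
  {v | ∃ π : Policy M, perfR μ r π = v}

/-- The set of scalar performance values of deterministic policies (single criterion). -/
def perfRSetDet (μ : Measure S) (r : S × A → ℝ) : Set ℝ :=
  {v | ∃ φ : Selector M, perfR μ r φ.policy = v}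

/-- The set of discounted performance vectors of all policies. -/
def dperfSet (μ : Measure S) {N : ℕ} (r : S × A → Fin N → ℝ) (β : ℝ) : Set (Fin N → ℝ) :=
  {v | ∃ π : Policy M, dperf μ r β π = v}

/-- The set of discounted performance vectors of deterministic policies. -/
def dperfSetDet (μ : Measure S) {N : ℕ} (r : S × A → Fin N → ℝ) (β : ℝ) : Set (Fin N → ℝ) :=
  {v | ∃ φ : Selector M, dperf μ r β φ.policy = v}

/-- An MDP (with initial distribution `μ`, reward `r`, state space `X̄ = X ∪ {star}`) is
absorbing. -/
structure Absorbing (μ : Measure S) {N : ℕ} (r : S × A → Fin N → ℝ) (star : S) (abar : A) :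
    Prop where
  mu_prob : IsProbabilityMeasure μ
  mu_star : μ {star} = 0
  act_star : M.act star = {abar}
  p_star : M.p (star, abar) {star} = 1
  r_star : ∀ n, r (star, abar) n = 0
  hit_bdd : ∃ L : ℝ, ∀ π : Policy M, (∑' t : ℕ, survive μ π star t) ≤ ENNReal.ofReal L

/-- A uniformly absorbing MDP:  `sup_{π ∈ 𝕄} E^π Σ_{t ≥ n} 1{t < T} → 0` as `n → ∞`. -/
structure UnifAbsorbing (μ : Measure S) {N : ℕ} (r : S × A → Fin N → ℝ) (star : S) (abar : A)
    extends Absorbing M μ r star abar : Prop where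
  unif : Tendsto (fun n : ℕ => ⨆ φ : MarkovNR M, ∑' t : ℕ, survive μ φ.policy star (n + t))
    atTop (𝓝 (0 : ℝ≥0∞))

/-- An absorbing MDP is atomless: the initial distribution and the transition probabilities are
atomless on `X = X̄ \ {star}`. -/
def AtomlessAbs (μ : Measure S) (star : S) : Prop :=
  (∀ x, x ≠ star → μ {x} = 0) ∧
    ∀ x y a, x ≠ star → y ≠ star → a ∈ M.act x → M.p (x, a) {y} = 0

/-- A (discounted) MDP is atomless. -/
def AtomlessD (μ : Measure S) : Prop :=
  (∀ x, μ {x} = 0) ∧ ∀ x y a, a ∈ M.act x → M.p (x, a) {y} = 0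

variable {M}

/-- The occupancy measure `Q^π` on `X × A` (where `X = X̄ \ {star}`). -/
noncomputable def occMeas (μ : Measure S) (π : Policy M) (star : S) : Measure (S × A) :=
  (Measure.sum fun t : ℕ => saMeas μ π t).restrict {z : S × A | z.1 ≠ star}

/-- `q_n^π`, the distribution of `x_n` restricted to `X = X̄ \ {star}`. -/
noncomputable def qn (μ : Measure S) (π : Policy M) (star : S) (n : ℕ) : Measure S :=
  (stateMeas μ π n).restrict {x | x ≠ star}

/-- The occupancy marginal `q^π = Σ_n q_n^π` on `X`. -/
noncomputable def qMeas (μ : Measure S) (π : Policy M) (star : S) : Measure S :=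
  Measure.sum fun n : ℕ => qn μ π star n

/-- Distance in total variation between two (finite) measures. -/
noncomputable def dTV {Z : Type*} [MeasurableSpace Z] (μ ν : Measure Z) : ℝ≥0∞ :=
  ⨆ (s : Set Z) (_ : MeasurableSet s), max (μ s - ν s) (ν s - μ s)

/-- `M'` is a submodel of `M`: same state and action spaces and transition probabilities, and
smaller action sets. -/
def IsSubmodel (M' M : MDP S A) : Prop :=
  M'.p = M.p ∧ ∀ x, M'.act x ⊆ M.act x

/-- The stationary policy `π*` averaging two deterministic policies:
`π*(B|x) = ½(1{φ⁰(x) ∈ B} + 1{φ¹(x) ∈ B})`. -/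
noncomputable def mixStat (f0 f1 : Selector M) : StatPolicy M where
  ker :=
    { toFun := fun x => (2 : ℝ≥0∞)⁻¹ • (Measure.dirac (f0.toFun x) + Measure.dirac (f1.toFun x))
      measurable' := by
        apply Measure.measurable_of_measurable_coe
        intro s hs
        simp_rw [Measure.smul_apply, Measure.add_apply, smul_eq_mul,
          Measure.dirac_apply' _ hs]
        exact (((measurable_one.indicator hs).comp f0.meas).add
          ((measurable_one.indicator hs).comp f1.meas)).const_mul _ }
  prob := by
    constructor
    intro x
    constructor
    show ((2 : ℝ≥0∞)⁻¹ • (Measure.dirac (f0.toFun x) + Measure.dirac (f1.toFun x))) Set.univ = 1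
    rw [Measure.smul_apply, Measure.add_apply, measure_univ, measure_univ, smul_eq_mul]
    rw [one_add_one_eq_two, ENNReal.inv_mul_cancel two_ne_zero ENNReal.ofNat_ne_top]
  feasible x := by
    show ((2 : ℝ≥0∞)⁻¹ • (Measure.dirac (f0.toFun x) + Measure.dirac (f1.toFun x)))
      {a | a ∈ M.act x} = 1
    rw [Measure.smul_apply, Measure.add_apply,
      Measure.dirac_apply_of_mem (show f0.toFun x ∈ {a | a ∈ M.act x} from f0.mem x),
      Measure.dirac_apply_of_mem (show f1.toFun x ∈ {a | a ∈ M.act x} from f1.mem x),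
      smul_eq_mul, one_add_one_eq_two,
      ENNReal.inv_mul_cancel two_ne_zero ENNReal.ofNat_ne_top]

/-- A point `v` of the performance set allows the dimensionality reduction. -/
def AllowsDimRed (M : MDP S A) (μ : Measure S) {N : ℕ} (r : S × A → Fin N → ℝ)
    (v : Fin N → ℝ) : Prop :=
  ∃ (i : Fin N) (b : Fin N → ℝ) (d : ℝ) (M' : MDP S A), IsSubmodel M' M ∧
    v ∈ perfSet M' μ r ∧
    ∀ w ∈ perfSet M' μ r, w i = d + ∑ j ∈ Finset.univ.erase i, b j * w j

end PaperMDP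



namespace PaperMDP

section Aux

open MeasureTheory ProbabilityTheory

variable {S A : Type*} [MeasurableSpace S] [MeasurableSpace A] {M : MDP S A}

lemma measurable_snocPair {n : ℕ} {Z : Type*} [MeasurableSpace Z] :
    Measurable (fun p : (Fin n → Z) × Z => (Fin.snoc p.1 p.2 : Fin (n + 1) → Z)) := by
  apply measurable_pi_lambda
  intro i
  induction i using Fin.lastCases with
  | last => simpa using measurable_snd
  | cast j =>
    simp only [Fin.snoc_castSucc]
    exact (measurable_pi_apply j).comp measurable_fst

lemma measurable_histSnoc {t : ℕ} :
    Measurable (fun q : (Hist S A t × A) × S =>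
      ((Fin.snoc q.1.1.1 q.2, Fin.snoc q.1.1.2 q.1.2) : Hist S A (t + 1))) := by
  apply Measurable.prodMk
  · exact measurable_snocPair.comp
      (((measurable_fst.comp measurable_fst).comp measurable_fst).prodMk measurable_snd)
  · exact measurable_snocPair.comp
      (((measurable_snd.comp measurable_fst).comp measurable_fst).prodMk
        (measurable_snd.comp measurable_fst))

/-- The one-step transition of the Ionescu–Tulcea recursion. -/
noncomputable def stepFun (π : Policy M) (t : ℕ) (h : Hist S A t) :
    Measure (Hist S A (t + 1)) :=
  (π.ker t h).bind fun a =>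
    (M.p (h.1 (Fin.last t), a)).map fun y => (Fin.snoc h.1 y, Fin.snoc h.2 a)

lemma histMeas_succ (μ : Measure S) (π : Policy M) (t : ℕ) :
    histMeas μ π (t + 1) = (histMeas μ π t).bind (stepFun π t) := rfl

lemma measurable_pSec (t : ℕ) (h : Hist S A t) {s : Set (Hist S A (t + 1))}
    (hs : MeasurableSet s) :
    Measurable fun a : A =>
      M.p (h.1 (Fin.last t), a) {y | (Fin.snoc h.1 y, Fin.snoc h.2 a) ∈ s} := by
  haveI := M.p_markov
  have hT : MeasurableSet {q : A × S |
      ((Fin.snoc h.1 q.2, Fin.snoc h.2 q.1) : Hist S A (t + 1)) ∈ s} := by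
    refine (Measurable.prodMk ?_ ?_) hs
    · exact measurable_snocPair.comp (measurable_const.prodMk measurable_snd)
    · exact measurable_snocPair.comp (measurable_const.prodMk measurable_fst)
  exact Kernel.measurable_kernel_prodMk_left
    (κ := M.p.comap (fun a : A => (h.1 (Fin.last t), a))
      (measurable_const.prodMk measurable_id)) hT

lemma measurable_pSec2 (t : ℕ) {s : Set (Hist S A (t + 1))} (hs : MeasurableSet s) :
    Measurable fun q : Hist S A t × A =>
      M.p (q.1.1 (Fin.last t), q.2) {y | (Fin.snoc q.1.1 y, Fin.snoc q.1.2 q.2) ∈ s} := by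
  haveI := M.p_markov
  have hg : Measurable fun q : Hist S A t × A => (q.1.1 (Fin.last t), q.2) :=
    (((measurable_pi_apply _).comp measurable_fst).comp measurable_fst).prodMk measurable_snd
  have hT : MeasurableSet {q : (Hist S A t × A) × S |
      ((Fin.snoc q.1.1.1 q.2, Fin.snoc q.1.1.2 q.1.2) : Hist S A (t + 1)) ∈ s} :=
    measurable_histSnoc hs
  exact Kernel.measurable_kernel_prodMk_left (κ := M.p.comap _ hg) hT

lemma stepFun_apply (π : Policy M) (t : ℕ) (h : Hist S A t) {s : Set (Hist S A (t + 1))}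
    (hs : MeasurableSet s) :
    stepFun π t h s = ∫⁻ a, M.p (h.1 (Fin.last t), a)
      {y | (Fin.snoc h.1 y, Fin.snoc h.2 a) ∈ s} ∂(π.ker t h) := by
  haveI := M.p_markov
  have hmap : ∀ a : A, Measurable fun y : S =>
      ((Fin.snoc h.1 y, Fin.snoc h.2 a) : Hist S A (t + 1)) := fun a =>
    (measurable_snocPair.comp (measurable_const.prodMk measurable_id)).prodMk measurable_const
  have hmeas : Measurable fun a : A =>
      (M.p (h.1 (Fin.last t), a)).map
        fun y => ((Fin.snoc h.1 y, Fin.snoc h.2 a) : Hist S A (t + 1)) := by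
    apply Measure.measurable_of_measurable_coe
    intro u hu
    simp_rw [Measure.map_apply (hmap _) hu]
    exact measurable_pSec t h hu
  rw [stepFun, Measure.bind_apply hs hmeas.aemeasurable]
  refine lintegral_congr fun a => ?_
  rw [Measure.map_apply (hmap a) hs]
  rfl

lemma measurable_stepFun (π : Policy M) (t : ℕ) : Measurable (stepFun π t) := by
  haveI := π.prob t
  apply Measure.measurable_of_measurable_coe
  intro s hs
  simp_rw [stepFun_apply π t _ hs]
  exact Measurable.lintegral_kernel_prod_right' (κ := π.ker t) (measurable_pSec2 t hs)

lemma lintegral_gamma_le (f0 f1 : Selector M) (γ : StatPolicy M)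
    (hγ : ∀ x : S, γ.ker x {f0.toFun x, f1.toFun x} = 1)
    (x : S) {G : A → ℝ≥0∞} (hG : Measurable G) :
    ∫⁻ a, G a ∂(γ.ker x) ≤ G (f0.toFun x) + G (f1.toFun x) := by
  haveI := γ.prob
  set c := G (f0.toFun x) + G (f1.toFun x) with hc
  have hE : MeasurableSet {a : A | c < G a} := measurableSet_lt measurable_const hG
  have hsub : ({f0.toFun x, f1.toFun x} : Set A) ⊆ {a | c < G a}ᶜ := by
    intro a ha
    simp only [Set.mem_compl_iff, Set.mem_setOf_eq, not_lt]
    rcases ha with rfl | ha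
    · exact le_self_add
    · rw [Set.mem_singleton_iff] at ha
      subst ha
      exact le_add_self
  have hEc : γ.ker x {a : A | c < G a}ᶜ = 1 :=
    le_antisymm prob_le_one (le_trans (le_of_eq (hγ x).symm) (measure_mono hsub))
  have hE0 : γ.ker x {a : A | c < G a} = 0 := by
    have h1 := measure_add_measure_compl (μ := γ.ker x) hE
    rw [hEc, measure_univ] at h1
    have h2 : (1 : ℝ≥0∞) + γ.ker x {a : A | c < G a} = 1 + 0 := by
      rw [add_zero, add_comm]; exact h1
    exact (ENNReal.add_right_inj ENNReal.one_ne_top).mp h2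
  have hae : ∀ᵐ a ∂γ.ker x, G a ≤ c := by
    rw [ae_iff]
    simpa [not_le] using hE0
  calc ∫⁻ a, G a ∂γ.ker x ≤ ∫⁻ _, c ∂γ.ker x := lintegral_mono_ae hae
    _ = c := by simp

lemma lintegral_mix (f0 f1 : Selector M) (x : S) {G : A → ℝ≥0∞} (hG : Measurable G) :
    ∫⁻ a, G a ∂((mixStat f0 f1).ker x)
      = 2⁻¹ * (G (f0.toFun x) + G (f1.toFun x)) := by
  show ∫⁻ a, G a
      ∂((2 : ℝ≥0∞)⁻¹ • (Measure.dirac (f0.toFun x) + Measure.dirac (f1.toFun x))) = _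
  rw [lintegral_smul_measure, lintegral_add_measure, lintegral_dirac' _ hG,
    lintegral_dirac' _ hG, smul_eq_mul]

lemma stepFun_le (f0 f1 : Selector M) (γ : StatPolicy M)
    (hγ : ∀ x : S, γ.ker x {f0.toFun x, f1.toFun x} = 1)
    (t : ℕ) (h : Hist S A t) {s : Set (Hist S A (t + 1))} (hs : MeasurableSet s) :
    stepFun γ.policy t h s ≤ 2 * stepFun (mixStat f0 f1).policy t h s := by
  rw [stepFun_apply _ _ _ hs, stepFun_apply _ _ _ hs]
  have hker1 : (γ.policy.ker t) h = γ.ker (h.1 (Fin.last t)) := rfl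
  have hker2 : ((mixStat f0 f1).policy.ker t) h = (mixStat f0 f1).ker (h.1 (Fin.last t)) := rfl
  rw [hker1, hker2, lintegral_mix f0 f1 (h.1 (Fin.last t)) (measurable_pSec t h hs)]
  refine le_trans (lintegral_gamma_le f0 f1 γ hγ _ (measurable_pSec t h hs)) ?_
  rw [← mul_assoc, ENNReal.mul_inv_cancel two_ne_zero ENNReal.ofNat_ne_top, one_mul]

lemma hist_le (f0 f1 : Selector M) (γ : StatPolicy M) (μ : Measure S)
    (hγ : ∀ x : S, γ.ker x {f0.toFun x, f1.toFun x} = 1) :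
    ∀ t : ℕ, ∀ s : Set (Hist S A t), MeasurableSet s →
      histMeas μ γ.policy t s ≤ 2 ^ t * histMeas μ (mixStat f0 f1).policy t s := by
  intro t
  induction t with
  | zero =>
    intro s hs
    rw [pow_zero, one_mul]
    exact le_of_eq rfl
  | succ t ih =>
    intro s hs
    have hmono : histMeas μ γ.policy t
        ≤ (2 ^ t : ℝ≥0∞) • histMeas μ (mixStat f0 f1).policy t := by
      rw [Measure.le_iff]
      intro u hu
      rw [Measure.smul_apply, smul_eq_mul]
      exact ih u hu
    have h1 : histMeas μ γ.policy (t + 1) s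
        = ∫⁻ h, stepFun γ.policy t h s ∂histMeas μ γ.policy t :=
      Measure.bind_apply hs (measurable_stepFun _ t).aemeasurable
    have h2 : histMeas μ (mixStat f0 f1).policy (t + 1) s
        = ∫⁻ h, stepFun (mixStat f0 f1).policy t h s ∂histMeas μ (mixStat f0 f1).policy t :=
      Measure.bind_apply hs (measurable_stepFun _ t).aemeasurable
    rw [h1, h2]
    calc ∫⁻ h, stepFun γ.policy t h s ∂histMeas μ γ.policy t
        ≤ ∫⁻ h, 2 * stepFun (mixStat f0 f1).policy t h s ∂histMeas μ γ.policy t :=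
          lintegral_mono fun h => stepFun_le f0 f1 γ hγ t h hs
      _ = 2 * ∫⁻ h, stepFun (mixStat f0 f1).policy t h s ∂histMeas μ γ.policy t :=
          lintegral_const_mul 2 ((Measure.measurable_coe hs).comp (measurable_stepFun _ _))
      _ ≤ 2 * ∫⁻ h, stepFun (mixStat f0 f1).policy t h s
            ∂((2 ^ t : ℝ≥0∞) • histMeas μ (mixStat f0 f1).policy t) :=
          mul_le_mul_right (lintegral_mono' hmono le_rfl) 2
      _ = 2 ^ (t + 1) * ∫⁻ h, stepFun (mixStat f0 f1).policy t h s
            ∂histMeas μ (mixStat f0 f1).policy t := by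
          rw [lintegral_smul_measure, smul_eq_mul, ← mul_assoc, pow_succ, mul_comm (2 : ℝ≥0∞) (2 ^ t)]

end Aux

end PaperMDP

open PaperMDP in
/-- For the MDP defined by two deterministic policies `φ⁰, φ¹` and the mixing
stationary policy `π*`, every stationary policy `γ` of this submodel, every nonnegative
measurable `f` and every `t` satisfy `E^γ f(x_t) ≤ 2^t E^{π*} f(x_t)`. -/
theorem lintegral_state_le_two_pow_mix
    {S A : Type*} [MeasurableSpace S] [MeasurableSpace A]
    (M : MDP S A) (μ : MeasureTheory.Measure S)
    (hμ : MeasureTheory.IsProbabilityMeasure μ)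
    (f0 f1 : Selector M)
    (γ : StatPolicy M)
    (hγ : ∀ x : S, γ.ker x {f0.toFun x, f1.toFun x} = 1) :
    ∀ (f : S → ℝ≥0∞), Measurable f → ∀ t : ℕ,
      ∫⁻ x, f x ∂(stateMeas μ γ.policy t) ≤
        2 ^ t * ∫⁻ x, f x ∂(stateMeas μ (mixStat f0 f1).policy t) := by
  intro f hf t
  have hproj : Measurable fun h : Hist S A t => h.1 (Fin.last t) :=
    (measurable_pi_apply _).comp measurable_fst
  rw [stateMeas, stateMeas, MeasureTheory.lintegral_map hf hproj,
    MeasureTheory.lintegral_map hf hproj]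
  have hmono : histMeas μ γ.policy t
      ≤ (2 ^ t : ℝ≥0∞) • histMeas μ (mixStat f0 f1).policy t := by
    rw [MeasureTheory.Measure.le_iff]
    intro u hu
    rw [MeasureTheory.Measure.smul_apply, smul_eq_mul]
    exact hist_le f0 f1 γ μ hγ t u hu
  calc ∫⁻ h, f (h.1 (Fin.last t)) ∂histMeas μ γ.policy t
      ≤ ∫⁻ h, f (h.1 (Fin.last t))
          ∂((2 ^ t : ℝ≥0∞) • histMeas μ (mixStat f0 f1).policy t) :=
        MeasureTheory.lintegral_mono' hmono le_rfl
    _ = 2 ^ t * ∫⁻ h, f (h.1 (Fin.last t)) ∂histMeas μ (mixStat f0 f1).policy t := by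
        rw [MeasureTheory.lintegral_smul_measure, smul_eq_mul]
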